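/- Let R be a nontrivial commutative ring and A a rank-two diagonalisable commutative Frobenius algebra over R with diagonal basis {a,b}. Then ε(a) is a unit of R. -/

import Mathlib

open TensorProduct

/-- For a rank-two diagonalisable commutative Frobenius algebra `A` over a
nontrivial commutative ring `R` with diagonal basis `{a, b}`, the counit value `ε a` is a
unit of `R`. -/
theorem diagonalisable_frobenius_counit_isUnit
(R A : Type*) [CommRing R] [Nontrivial R] [CommRing A] [Algebra R A]
    (B : Module.Basis (Fin 2) R A) (a b : A) (hB0 : B 0 = a) (hB1 : B 1 = b)
    (ha : a * a = a) (hb : b * b = b) (hab : a * b = 0)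
    (ε : A →ₗ[R] R) (Δ : A →ₗ[R] A ⊗[R] A)
    (hnd : Function.Bijective fun x : A => ε ∘ₗ LinearMap.mul R A x)
    (hfrob : ∀ x y : A,
      TensorProduct.rid R A
        (TensorProduct.map LinearMap.id (ε ∘ₗ LinearMap.mulRight R y) (Δ x)) = x * y) :
    IsUnit (ε a) := by
  obtain ⟨x, hx⟩ := hnd.2 (B.coord 0)
  have h1 : ε (x * a) = 1 := by
    have := congrArg (fun f => f a) hx
    simpa [LinearMap.mul_apply', Module.Basis.coord_apply, ← hB0] using this
  have hxs : x = B.repr x 0 • a + B.repr x 1 • b := by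
    conv_lhs => rw [← B.sum_repr x]
    rw [Fin.sum_univ_two, hB0, hB1]
  have h2 : x * a = B.repr x 0 • a := by
    conv_lhs => rw [hxs]
    rw [add_mul, smul_mul_assoc, smul_mul_assoc, ha, mul_comm b a, hab,
      smul_zero, add_zero]
  rw [h2, map_smul, smul_eq_mul] at h1
  exact isUnit_of_mul_isUnit_right (h1 ▸ isUnit_one)
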